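/- Let f : I → ℝ be twice differentiable on the interior of interval I with d ≤ f'' ≤ D there, and let γ < Γ be points in the interior of I. Then for all x ∈ [γ,Γ]: (1/2)·(Γ−x)·(x−γ)·d ≤ ((Γ−x)·f(γ) + (x−γ)·f(Γ))/(Γ−γ) − f(x) ≤ (1/2)·(Γ−x)·(x−γ)·D. -/

import Mathlib

theorem stmt_12 (I : Set ℝ) (hI : I.OrdConnected) (f f' f'' : ℝ → ℝ)
    (hf : ∀ t ∈ interior I, HasDerivAt f (f' t) t)
    (hf' : ∀ t ∈ interior I, HasDerivAt f' (f'' t) t)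
    (d D : ℝ) (hd : ∀ t ∈ interior I, d ≤ f'' t) (hD : ∀ t ∈ interior I, f'' t ≤ D)
    (γ Γ : ℝ) (hγ : γ ∈ interior I) (hΓ : Γ ∈ interior I) (hγΓ : γ < Γ)
    (x : ℝ) (hx : x ∈ Set.Icc γ Γ) :
    1/2 * (Γ - x) * (x - γ) * d ≤ ((Γ - x) * f γ + (x - γ) * f Γ) / (Γ - γ) - f x ∧
    ((Γ - x) * f γ + (x - γ) * f Γ) / (Γ - γ) - f x ≤ 1/2 * (Γ - x) * (x - γ) * D := by
  have hconvI : Convex ℝ I := hI.convex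
  have hconv : Convex ℝ (interior I) := hconvI.interior
  have hintS : interior (interior I) = interior I := interior_interior
  -- g := D/2 t² - f t is convex on interior I
  have hg : ConvexOn ℝ (interior I) (fun t => D / 2 * t ^ 2 - f t) := by
    apply convexOn_of_hasDerivWithinAt2_nonneg (f' := fun t => D * t - f' t)
      (f'' := fun t => D - f'' t) hconv
    · exact ContinuousOn.sub (by fun_prop) (fun t ht =>
        (hf t ht).continuousAt.continuousWithinAt)
    · intro t ht
      rw [hintS] at ht
      exact (((hasDerivAt_pow 2 t).const_mul (D / 2)).sub (hf t ht)).hasDerivWithinAt.congr_deriv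
        (by ring)
    · intro t ht
      rw [hintS] at ht
      exact (((hasDerivAt_id t).const_mul D).sub (hf' t ht)).hasDerivWithinAt.congr_deriv
        (by ring)
    · intro t ht
      rw [hintS] at ht
      linarith [hD t ht]
  -- h := f t - d/2 t² is convex on interior I
  have hh : ConvexOn ℝ (interior I) (fun t => f t - d / 2 * t ^ 2) := by
    apply convexOn_of_hasDerivWithinAt2_nonneg (f' := fun t => f' t - d * t)
      (f'' := fun t => f'' t - d) hconv
    · exact ContinuousOn.sub (fun t ht => (hf t ht).continuousAt.continuousWithinAt) (by fun_prop)
    · intro t ht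
      rw [hintS] at ht
      exact ((hf t ht).sub ((hasDerivAt_pow 2 t).const_mul (d / 2))).hasDerivWithinAt.congr_deriv
        (by ring)
    · intro t ht
      rw [hintS] at ht
      exact ((hf' t ht).sub ((hasDerivAt_id t).const_mul d)).hasDerivWithinAt.congr_deriv
        (by ring)
    · intro t ht
      rw [hintS] at ht
      linarith [hd t ht]
  obtain ⟨hx1, hx2⟩ := hx
  have hΓγ : (0:ℝ) < Γ - γ := by linarith
  have ha0 : 0 ≤ (Γ - x) / (Γ - γ) := div_nonneg (by linarith) hΓγ.le
  have hb0 : 0 ≤ (x - γ) / (Γ - γ) := div_nonneg (by linarith) hΓγ.le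
  have hab : (Γ - x) / (Γ - γ) + (x - γ) / (Γ - γ) = 1 := by field_simp; ring
  have hxe : ((Γ - x) / (Γ - γ)) • γ + ((x - γ) / (Γ - γ)) • Γ = x := by
    rw [smul_eq_mul, smul_eq_mul]; field_simp; ring
  have key1 := hg.2 hγ hΓ ha0 hb0 hab
  have key2 := hh.2 hγ hΓ ha0 hb0 hab
  rw [hxe] at key1 key2
  simp only [smul_eq_mul] at key1 key2
  have haΓ : (Γ - x) / (Γ - γ) * (Γ - γ) = Γ - x := by field_simp
  have hbΓ : (x - γ) / (Γ - γ) * (Γ - γ) = x - γ := by field_simp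
  have e : ∀ A B : ℝ, (Γ - γ) * ((Γ - x) / (Γ - γ) * A + (x - γ) / (Γ - γ) * B) =
      (Γ - x) * A + (x - γ) * B := fun A B => by field_simp
  have k1 : (Γ - γ) * (D / 2 * x ^ 2 - f x) ≤
      (Γ - x) * (D / 2 * γ ^ 2 - f γ) + (x - γ) * (D / 2 * Γ ^ 2 - f Γ) := by
    have h := mul_le_mul_of_nonneg_left key1 hΓγ.le
    rwa [e] at h
  have k2 : (Γ - γ) * (f x - d / 2 * x ^ 2) ≤
      (Γ - x) * (f γ - d / 2 * γ ^ 2) + (x - γ) * (f Γ - d / 2 * Γ ^ 2) := by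
    have h := mul_le_mul_of_nonneg_left key2 hΓγ.le
    rwa [e] at h
  constructor
  · rw [le_sub_iff_add_le, le_div_iff₀ hΓγ]
    nlinarith [k2]
  · rw [sub_le_iff_le_add, div_le_iff₀ hΓγ]
    nlinarith [k1]
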